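/- arXiv:2112.04033 — 2 statements merged into one kernel-verified Lean document; each statement's English description precedes it below -/
import Mathlib

section
/- For any k ≥ 1 and n ≥ 2k, the sum of binomial coefficients ∑_{i=0}^{⌈n/2⌉ - k} C(n,i) is at most 2^{n-1} · e^{-2(k-1)²/n} (Hoeffding bound on the binomial lower tail). -/
open Finset

lemma exp_pade {x : ℝ} (h0 : 0 ≤ x) : Real.exp x * (2 - x) ≤ 2 + x := by
  have hmono : MonotoneOn (fun y : ℝ => 2 + y - Real.exp y * (2 - y)) (Set.Ici 0) := by
    apply monotoneOn_of_deriv_nonneg (convex_Ici 0)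
    · fun_prop
    · fun_prop
    · intro y hy
      have hd : deriv (fun y : ℝ => 2 + y - Real.exp y * (2 - y)) y
          = 1 - Real.exp y * (1 - y) := by
        have : HasDerivAt (fun y : ℝ => 2 + y - Real.exp y * (2 - y))
            (1 - Real.exp y * (1 - y)) y := by
          have h1 : HasDerivAt (fun y : ℝ => Real.exp y * (2 - y))
              (Real.exp y * (2 - y) + Real.exp y * (-1)) y :=
            (Real.hasDerivAt_exp y).mul ((hasDerivAt_id y).const_sub 2)
          have h2' : HasDerivAt (fun y : ℝ => 2 + y) 1 y := by
            simpa using (hasDerivAt_id y).const_add 2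
          have := h2'.sub h1
          exact this.congr_deriv (by ring)
        exact this.deriv
      rw [hd]
      have e1 : Real.exp (-y) * Real.exp y = 1 := by rw [← Real.exp_add]; simp
      nlinarith [Real.add_one_le_exp (-y), Real.exp_pos y, Real.exp_pos (-y)]
  have h := hmono (Set.self_mem_Ici) (Set.mem_Ici.mpr h0) h0
  simp only [Real.exp_zero] at h
  nlinarith [h]

lemma half_sum (n : ℕ) (hn : 1 ≤ n) :
    ∑ i ∈ range ((n+1)/2), n.choose i ≤ 2^(n-1) := by
  set M := (n+1)/2 with hM
  have h2M : 2*M ≤ n+1 := by omega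
  have hMn : M ≤ n := by omega
  have hsymm : ∑ i ∈ range M, n.choose i = ∑ i ∈ Ico (n+1-M) (n+1), n.choose i := by
    have := Finset.sum_Ico_reflect (fun i => n.choose i) 0 (by omega : M ≤ n + 1)
    simp only [Nat.sub_zero] at this
    rw [← this, ← Finset.range_eq_Ico]
    apply Finset.sum_congr rfl
    intro i hi
    exact (Nat.choose_symm (by simp at hi; omega)).symm
  have hdisj : Disjoint (range M) (Ico (n+1-M) (n+1)) := by
    rw [Finset.range_eq_Ico]
    exact (Finset.Ico_disjoint_Ico_consecutive 0 M (n+1)).mono_right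
      (Finset.Ico_subset_Ico (by omega) le_rfl)
  have htot : ∑ i ∈ range M, n.choose i + ∑ i ∈ Ico (n+1-M) (n+1), n.choose i ≤ 2^n := by
    rw [← Finset.sum_union hdisj, ← Nat.sum_range_choose n]
    apply Finset.sum_le_sum_of_subset
    intro i hi
    simp only [Finset.mem_union, Finset.mem_range, Finset.mem_Ico] at hi ⊢
    omega
  rw [← hsymm] at htot
  have : 2^n = 2 * 2^(n-1) := by
    rw [← pow_succ']
    congr 1; omega
  omega

lemma ratio_step (n m : ℕ) (hm : 1 ≤ m) (hmn : m ≤ n) :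
    ((∑ i ∈ range m, n.choose i : ℕ) : ℝ) * ((n:ℝ) - m + 1) ≤
      (m:ℝ) * ((∑ i ∈ range (m+1), n.choose i : ℕ) : ℝ) := by
  push_cast
  rw [Finset.sum_mul]
  have step1 : ∑ i ∈ range m, (n.choose i : ℝ) * ((n:ℝ) - m + 1) ≤
      ∑ i ∈ range m, (m:ℝ) * (n.choose (i+1) : ℝ) := by
    apply Finset.sum_le_sum
    intro i hi
    have hi' : i < m := Finset.mem_range.mp hi
    have h0 := Nat.choose_succ_right_eq n i
    have hid : (n.choose (i+1) : ℝ) * ((i:ℝ)+1) = (n.choose i : ℝ) * ((n:ℝ) - i) := by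
      have h1 : ((n.choose (i+1) * (i+1) : ℕ) : ℝ) = ((n.choose i * (n - i) : ℕ) : ℝ) := by
        exact_mod_cast congrArg (Nat.cast : ℕ → ℝ) h0
      push_cast [Nat.cast_sub (show i ≤ n by omega)] at h1
      linarith
    have h1 : (i:ℝ) + 1 ≤ (m:ℝ) := by exact_mod_cast hi'
    have h2 : (m:ℝ) ≤ (n:ℝ) := by exact_mod_cast hmn
    have hc : (0:ℝ) ≤ (n.choose i : ℝ) := by positivity
    nlinarith [hid, mul_nonneg hc (sub_nonneg.mpr h2)]
  refine step1.trans ?_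
  rw [← Finset.mul_sum]
  apply mul_le_mul_of_nonneg_left _ (by positivity)
  have heq : ∑ i ∈ range m, (n.choose (i+1):ℝ) = ∑ i ∈ Ico 1 (m+1), (n.choose i:ℝ) := by
    rw [Finset.sum_Ico_eq_sum_range]
    simp [add_comm]
  rw [heq]
  apply Finset.sum_le_sum_of_subset_of_nonneg
  · intro i hi; simp only [Finset.mem_Ico, Finset.mem_range] at hi ⊢; omega
  · intros; positivity

lemma exp_step (n j : ℕ) (hj : 2 ≤ j) (hjM : j ≤ (n+1)/2) :
    ((∑ i ∈ range ((n+1)/2 - j + 1), n.choose i : ℕ) : ℝ) ≤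
      Real.exp (-(4*((j:ℝ)-1))/(n+1)) *
        ((∑ i ∈ range ((n+1)/2 - j + 2), n.choose i : ℕ) : ℝ) := by
  set M := (n+1)/2 with hM
  have hMn : M ≤ n := by omega
  set m := M - j + 1 with hm
  have hm1 : 1 ≤ m := by omega
  have hmn : m ≤ n := by omega
  have hmm : M - j + 2 = m + 1 := by omega
  rw [hmm]
  have hr := ratio_step n m hm1 hmn
  set c : ℝ := 4*((j:ℝ)-1)/(n+1) with hc
  have hn1 : (0:ℝ) < (n:ℝ) + 1 := by positivity
  have hj2 : (2:ℝ) ≤ (j:ℝ) := by exact_mod_cast hj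
  have hc0 : 0 ≤ c := by
    apply div_nonneg _ (le_of_lt hn1); linarith
  have hpade := exp_pade hc0
  have hmr : (m:ℝ) = (M:ℝ) - (j:ℝ) + 1 := by
    have : (m:ℕ) = M - j + 1 := hm
    have hjM' : j ≤ M := hjM
    push_cast [this, Nat.cast_sub hjM']
    ring
  have h2M : 2*(M:ℝ) ≤ (n:ℝ)+1 := by exact_mod_cast (by omega : 2*M ≤ n+1)
  have hcn : c * ((n:ℝ)+1) = 4*((j:ℝ)-1) := by
    rw [hc, div_mul_cancel₀ _ (ne_of_gt hn1)]
  have key : (m:ℝ)*(2+c) ≤ ((n:ℝ)-(m:ℝ)+1)*(2-c) := by nlinarith [hmr, h2M, hcn]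
  have hexp : Real.exp c * (m:ℝ) ≤ (n:ℝ) - (m:ℝ) + 1 := by
    have hc2 : c < 2 := by
      rw [hc, div_lt_iff₀ hn1]
      have : (j:ℝ) ≤ (M:ℝ) := by exact_mod_cast hjM
      linarith
    nlinarith [mul_le_mul_of_nonneg_right hpade (Nat.cast_nonneg m : (0:ℝ) ≤ (m:ℝ)),
      mul_pos (Real.exp_pos c) (show (0:ℝ) < (m:ℝ) by exact_mod_cast hm1)]
  set T0 : ℝ := ((∑ i ∈ range m, n.choose i : ℕ) : ℝ)
  set T1 : ℝ := ((∑ i ∈ range (m+1), n.choose i : ℕ) : ℝ)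
  have hT0 : 0 ≤ T0 := by positivity
  have hmpos : (0:ℝ) < (m:ℝ) := by exact_mod_cast hm1
  have hkey : T0 * Real.exp c ≤ T1 := by
    have h1 : T0 * Real.exp c * (m:ℝ) ≤ T1 * (m:ℝ) := by
      calc T0 * Real.exp c * (m:ℝ) = T0 * (Real.exp c * (m:ℝ)) := by ring
        _ ≤ T0 * ((n:ℝ) - (m:ℝ) + 1) := mul_le_mul_of_nonneg_left hexp hT0
        _ ≤ (m:ℝ) * T1 := hr
        _ = T1 * (m:ℝ) := by ring
    exact le_of_mul_le_mul_right h1 hmpos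
  have hfin := mul_le_mul_of_nonneg_right hkey (le_of_lt (Real.exp_pos (-c)))
  have : Real.exp c * Real.exp (-c) = 1 := by rw [← Real.exp_add]; simp
  calc T0 = T0 * (Real.exp c * Real.exp (-c)) := by rw [this]; ring
    _ = T0 * Real.exp c * Real.exp (-c) := by ring
    _ ≤ T1 * Real.exp (-c) := hfin
    _ = Real.exp (-c) * T1 := by ring
    _ = Real.exp (-(4*((j:ℝ)-1))/(n+1)) * T1 := by rw [hc, neg_div]

lemma main_ind (n : ℕ) : ∀ j : ℕ, 1 ≤ j → j ≤ (n+1)/2 →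
    ((∑ i ∈ range ((n+1)/2 - j + 1), n.choose i : ℕ) : ℝ) ≤
      Real.exp (-(2*(j:ℝ)*((j:ℝ)-1))/(n+1)) *
        ((∑ i ∈ range ((n+1)/2), n.choose i : ℕ) : ℝ) := by
  intro j hj1
  induction j, hj1 using Nat.le_induction with
  | base =>
    intro h1
    have : (n+1)/2 - 1 + 1 = (n+1)/2 := by omega
    rw [this]
    simp
  | succ j hj ih =>
    intro hsucc
    have hjM : j ≤ (n+1)/2 := by omega
    have step := exp_step n (j+1) (by omega) hsucc
    have heq : (n+1)/2 - (j+1) + 2 = (n+1)/2 - j + 1 := by omega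
    rw [heq] at step
    have ihj := ih hjM
    have hT : (0:ℝ) ≤ ((∑ i ∈ range ((n+1)/2 - j + 1), n.choose i : ℕ) : ℝ) := by positivity
    calc ((∑ i ∈ range ((n+1)/2 - (j+1) + 1), n.choose i : ℕ) : ℝ)
        ≤ Real.exp (-(4*(((j:ℝ)+1)-1))/(n+1)) *
          ((∑ i ∈ range ((n+1)/2 - j + 1), n.choose i : ℕ) : ℝ) := by push_cast at step ⊢; exact step
      _ ≤ Real.exp (-(4*(((j:ℝ)+1)-1))/(n+1)) *
          (Real.exp (-(2*(j:ℝ)*((j:ℝ)-1))/(n+1)) *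
            ((∑ i ∈ range ((n+1)/2), n.choose i : ℕ) : ℝ)) := by
          exact mul_le_mul_of_nonneg_left ihj (le_of_lt (Real.exp_pos _))
      _ = Real.exp (-(2*((j:ℝ)+1)*(((j:ℝ)+1)-1))/(n+1)) *
            ((∑ i ∈ range ((n+1)/2), n.choose i : ℕ) : ℝ) := by
          rw [← mul_assoc, ← Real.exp_add]
          congr 2
          field_simp
          ring
      _ = Real.exp (-(2*((j+1:ℕ):ℝ)*(((j+1:ℕ):ℝ)-1))/(n+1)) *
            ((∑ i ∈ range ((n+1)/2), n.choose i : ℕ) : ℝ) := by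
          norm_num

/-- Hoeffding bound on the binomial lower tail:
for `k ≥ 1` and `n ≥ 2k`, `∑_{i=0}^{⌈n/2⌉-k} C(n,i) ≤ 2^{n-1} e^{-2(k-1)²/n}`. -/
theorem stmt_2 (k n : ℕ) (hk : 1 ≤ k) (hn : 2 * k ≤ n) :
    ((∑ i ∈ Finset.range ((n + 1) / 2 - k + 1), n.choose i : ℕ) : ℝ) ≤
      (2 : ℝ) ^ (n - 1) * Real.exp (-2 * ((k : ℝ) - 1) ^ 2 / n) := by
  have hkM : k ≤ (n+1)/2 := by omega
  have hn2 : 2 ≤ n := by omega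
  have h1 := main_ind n k hk hkM
  have h2 : ((∑ i ∈ range ((n+1)/2), n.choose i : ℕ) : ℝ) ≤ (2:ℝ)^(n-1) := by
    have := half_sum n (by omega)
    calc ((∑ i ∈ range ((n+1)/2), n.choose i : ℕ) : ℝ) ≤ ((2^(n-1) : ℕ) : ℝ) := by
          exact_mod_cast this
      _ = (2:ℝ)^(n-1) := by push_cast; ring
  have h3 : Real.exp (-(2*(k:ℝ)*((k:ℝ)-1))/(n+1)) ≤ Real.exp (-2 * ((k : ℝ) - 1) ^ 2 / n) := by
    apply Real.exp_le_exp.mpr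
    rw [div_le_div_iff₀ (by positivity) (by positivity)]
    have hk1 : (1:ℝ) ≤ (k:ℝ) := by exact_mod_cast hk
    have hnk : 2*(k:ℝ) ≤ (n:ℝ) := by exact_mod_cast hn
    nlinarith [mul_nonneg (sub_nonneg.mpr hk1) (show (0:ℝ) ≤ (n:ℝ) - (k:ℝ) + 1 by nlinarith)]
  calc ((∑ i ∈ Finset.range ((n + 1) / 2 - k + 1), n.choose i : ℕ) : ℝ)
      ≤ Real.exp (-(2*(k:ℝ)*((k:ℝ)-1))/(n+1)) *
        ((∑ i ∈ range ((n+1)/2), n.choose i : ℕ) : ℝ) := h1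
    _ ≤ Real.exp (-2 * ((k : ℝ) - 1) ^ 2 / n) * (2:ℝ)^(n-1) := by
        apply mul_le_mul h3 h2 (by positivity) (le_of_lt (Real.exp_pos _))
    _ = (2 : ℝ) ^ (n - 1) * Real.exp (-2 * ((k : ℝ) - 1) ^ 2 / n) := by ring
end

section
/- Define the classifier C on {0,1}^N by C(x) = 0 if ∑_i x_i < N/2 and C(x) = 1 otherwise. Let A = C^{-1}(0). Then A is nonempty, |A| ≤ 2^{N-1}, and for every real c with 0 < c < 1/4, the number of x ∈ A such that every y ∈ {0,1}^N with Hamming distance d_H(x,y) ≤ c√N − 2 satisfies C(y) = 0 is at least (1 − 4c)·|A|. -/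
open Finset


lemma centralBinom_sqrt_le (n : ℕ) :
    (Nat.centralBinom n : ℝ) * Real.sqrt (3 * n + 1) ≤ 4 ^ n := by
  induction n with
  | zero => simp [Nat.centralBinom]
  | succ n ih =>
    have key : (Nat.centralBinom (n+1) : ℝ) * (n + 1) = 2 * (2 * n + 1) * Nat.centralBinom n := by
      have := Nat.succ_mul_centralBinom_succ n
      exact_mod_cast by push_cast [← this]; ring
    have hs1 : (0:ℝ) ≤ 3 * n + 1 := by positivity
    have hs2 : (0:ℝ) ≤ 3 * (n:ℝ) + 4 := by positivity
    -- (2n+1) √(3n+4) ≤ (2n+2) √(3n+1)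
    have hsq : (2 * (n:ℝ) + 1) * Real.sqrt (3 * n + 4) ≤ (2 * n + 2) * Real.sqrt (3 * n + 1) := by
      have h1 : (0:ℝ) ≤ 2 * (n:ℝ) + 1 := by positivity
      have h2 : (0:ℝ) ≤ 2 * (n:ℝ) + 2 := by positivity
      rw [← Real.sqrt_sq h1, ← Real.sqrt_sq h2, ← Real.sqrt_mul (by positivity),
        ← Real.sqrt_mul (by positivity)]
      apply Real.sqrt_le_sqrt
      nlinarith
    have hcb : (0:ℝ) ≤ (Nat.centralBinom n : ℝ) := by positivity
    have hnp : (0:ℝ) < (n:ℝ) + 1 := by positivity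
    have push : ((3 : ℝ) * ((n:ℕ)+1 : ℕ) + 1) = 3 * (n:ℝ) + 4 := by push_cast; ring
    rw [push]
    have : (Nat.centralBinom (n+1) : ℝ) = 2 * (2 * n + 1) * Nat.centralBinom n / (n + 1) := by
      field_simp at key ⊢; linarith [key]
    rw [this]
    rw [div_mul_eq_mul_div, div_le_iff₀ hnp]
    calc 2 * (2 * (n:ℝ) + 1) * Nat.centralBinom n * Real.sqrt (3 * n + 4)
        = (Nat.centralBinom n : ℝ) * (2 * ((2 * n + 1) * Real.sqrt (3 * n + 4))) := by ring
      _ ≤ (Nat.centralBinom n : ℝ) * (2 * ((2 * n + 2) * Real.sqrt (3 * n + 1))) := by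
          apply mul_le_mul_of_nonneg_left _ hcb
          have := hsq; nlinarith
      _ = (Nat.centralBinom n : ℝ) * Real.sqrt (3 * n + 1) * (4 * (n + 1)) := by ring
      _ ≤ 4 ^ n * (4 * (n+1)) := by
          apply mul_le_mul_of_nonneg_right ih; positivity
      _ = 4 ^ (n+1) * (n+1) := by ring

lemma choose_half_sqrt_le (N : ℕ) :
    (N.choose (N / 2) : ℝ) * Real.sqrt N ≤ 2 ^ N := by
  rcases Nat.even_or_odd N with ⟨n, hn⟩ | ⟨n, hn⟩
  · subst hn
    have h1 : (n + n) / 2 = n := by omega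
    rw [h1]
    have hcb : (n + n).choose n = Nat.centralBinom n := by rw [Nat.centralBinom]; congr 1; omega
    rw [hcb]
    have h4 : (4:ℝ) ^ n = 2 ^ (n + n) := by
      rw [show (4:ℝ) = 2^2 by norm_num, ← pow_mul]; congr 1; omega
    rw [Nat.cast_add]
    calc (Nat.centralBinom n : ℝ) * Real.sqrt ((n:ℝ) + n)
        ≤ (Nat.centralBinom n : ℝ) * Real.sqrt (3 * n + 1) := by
          apply mul_le_mul_of_nonneg_left _ (by positivity)
          apply Real.sqrt_le_sqrt; push_cast; linarith
      _ ≤ 4 ^ n := centralBinom_sqrt_le n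
      _ = 2 ^ (n + n) := h4
  · subst hn
    have h1 : (2 * n + 1) / 2 = n := by omega
    rw [h1]
    have pascal : (2*n+2).choose (n+1) = (2*n+1).choose n + (2*n+1).choose (n+1) := by
      rw [show 2*n+2 = (2*n+1)+1 by ring]; exact Nat.choose_succ_succ _ _
    have symm : (2*n+1).choose (n+1) = (2*n+1).choose n := by
      rw [← Nat.choose_symm (by omega : n + 1 ≤ 2*n+1)]; congr 1; omega
    have hcbe : Nat.centralBinom (n+1) = (2*n+2).choose (n+1) := by
      rw [Nat.centralBinom, show 2*(n+1) = 2*n+2 from by ring]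
    have key : 2 * (2 * n + 1).choose n = Nat.centralBinom (n + 1) := by omega
    have key' : ((2 * n + 1).choose n : ℝ) = Nat.centralBinom (n + 1) / 2 := by
      rw [eq_div_iff (by norm_num)]
      exact_mod_cast (by omega : (2*n+1).choose n * 2 = Nat.centralBinom (n+1))
    rw [key']
    have hb := centralBinom_sqrt_le (n+1)
    push_cast at hb
    have hs : Real.sqrt ((2*n+1:ℕ):ℝ) ≤ Real.sqrt (3*((n:ℝ)+1)+1) := by
      apply Real.sqrt_le_sqrt; push_cast; linarith
    have hcbn : (0:ℝ) ≤ Nat.centralBinom (n+1) := by positivity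
    have h4 : (4:ℝ) ^ (n+1) = 2 * 2 ^ (2*n+1) := by
      rw [show (4:ℝ) = 2^2 by norm_num, ← pow_mul, show 2*(n+1) = (2*n+1)+1 from by ring, pow_succ]; ring
    have chain : (Nat.centralBinom (n+1) : ℝ) * Real.sqrt ((2*n+1:ℕ):ℝ) ≤ 2 * 2^(2*n+1) := by
      rw [← h4]
      calc (Nat.centralBinom (n+1) : ℝ) * Real.sqrt ((2*n+1:ℕ):ℝ)
          ≤ (Nat.centralBinom (n+1) : ℝ) * Real.sqrt (3*((n:ℝ)+1)+1) :=
            mul_le_mul_of_nonneg_left hs hcbn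
        _ ≤ 4 ^ (n+1) := hb
    linarith


lemma layer_card_le (N k : ℕ) :
    ((Finset.univ : Finset (Fin N → Bool)).filter
      (fun x => (Finset.univ.filter (fun i => x i = true)).card = k)).card ≤ N.choose k := by
  have : N.choose k = (Finset.powersetCard k (Finset.univ : Finset (Fin N))).card := by
    rw [Finset.card_powersetCard, Finset.card_univ, Fintype.card_fin]
  rw [this]
  apply Finset.card_le_card_of_injOn (fun x => Finset.univ.filter (fun i => x i = true))
  · intro x hx
    simp only [Finset.mem_coe, Finset.mem_filter, Finset.mem_univ, true_and] at hx
    rw [Finset.mem_coe, Finset.mem_powersetCard]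
    exact ⟨Finset.subset_univ _, hx⟩
  · intro x _ y _ hxy
    funext i
    have hxy' : Finset.univ.filter (fun i => x i = true) =
        Finset.univ.filter (fun i => y i = true) := hxy
    have : (i ∈ Finset.univ.filter (fun i => x i = true)) ↔
        (i ∈ Finset.univ.filter (fun i => y i = true)) := by rw [hxy']
    simp only [Finset.mem_filter, Finset.mem_univ, true_and] at this
    cases hx : x i <;> cases hy : y i <;> simp_all

lemma wt_le (N : ℕ) (x y : Fin N → Bool) :
    (Finset.univ.filter (fun i => y i = true)).card ≤
      (Finset.univ.filter (fun i => x i = true)).card + hammingDist x y := by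
  have hsub : Finset.univ.filter (fun i => y i = true) ⊆
      Finset.univ.filter (fun i => x i = true) ∪ Finset.univ.filter (fun i => x i ≠ y i) := by
    intro i hi
    simp only [Finset.mem_filter, Finset.mem_univ, true_and, Finset.mem_union] at hi ⊢
    by_cases h : x i = y i
    · left; rw [h, hi]
    · right; exact h
  have hd : hammingDist x y = (Finset.univ.filter (fun i => x i ≠ y i)).card := rfl
  calc (Finset.univ.filter (fun i => y i = true)).card
      ≤ (Finset.univ.filter (fun i => x i = true) ∪ Finset.univ.filter (fun i => x i ≠ y i)).card :=
        Finset.card_le_card hsub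
    _ ≤ _ := by rw [hd]; exact Finset.card_union_le _ _

/-- The majority-vote classifier `C(x) = 0 iff ∑ xᵢ < N/2` has a nonempty class
`A = C⁻¹(0)` with `|A| ≤ 2^{N-1}`, and for `0 < c < 1/4` at least `(1-4c)|A|` points of `A`
are robust to Hamming perturbations of size `c√N - 2`. -/
theorem stmt_4 (N : ℕ) (hN : 1 ≤ N) (c : ℝ) (hc0 : 0 < c) (hc1 : c < 1 / 4)
    (C : (Fin N → Bool) → Fin 2)
    (hC : ∀ x, C x = if ((Finset.univ.filter (fun i => x i = true)).card : ℝ) < (N : ℝ) / 2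
      then 0 else 1)
    (A : Finset (Fin N → Bool))
    (hA : A = (Finset.univ : Finset (Fin N → Bool)).filter (fun x => C x = 0)) :
    A.Nonempty ∧ A.card ≤ 2 ^ (N - 1) ∧
      (1 - 4 * c) * (A.card : ℝ) ≤
        ((A.filter (fun x => ∀ y : Fin N → Bool,
          (hammingDist x y : ℝ) ≤ c * Real.sqrt N - 2 → C y = 0)).card : ℝ) := by
  set w : (Fin N → Bool) → ℕ := fun x => (Finset.univ.filter (fun i => x i = true)).card with hw
  have hC0 : ∀ x, C x = 0 ↔ ((w x : ℝ) < (N : ℝ) / 2) := by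
    intro x
    rw [hC x]
    split
    · simp_all
    · constructor
      · intro h; exact absurd h (by decide)
      · intro h; linarith
  have hmem : ∀ x, x ∈ A ↔ ((w x : ℝ) < (N : ℝ) / 2) := by
    intro x; rw [hA, Finset.mem_filter]; simp [hC0 x]
  -- nonemptiness
  have hne : A.Nonempty := by
    refine ⟨fun _ => false, ?_⟩
    rw [hmem]
    have : w (fun _ => false) = 0 := by simp [hw]
    rw [this]
    have : (1:ℝ) ≤ N := by exact_mod_cast hN
    push_cast; linarith
  -- negation map
  set neg : (Fin N → Bool) → (Fin N → Bool) := fun x i => !(x i) with hneg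
  have hneginv : ∀ x, neg (neg x) = x := by
    intro x; funext i; simp [hneg]
  have hwneg : ∀ x, w x + w (neg x) = N := by
    intro x
    have h1 : (Finset.univ.filter (fun i => (neg x) i = true)) =
        (Finset.univ.filter (fun i => ¬(x i = true))) := by
      apply Finset.filter_congr; intro i _; simp [hneg]
    have h2 := Finset.card_filter_add_card_filter_not
      (s := (Finset.univ : Finset (Fin N))) (p := fun i => x i = true)
    simp only [Finset.card_univ, Fintype.card_fin] at h2
    rw [hw]; simp only; rw [h1]; exact h2
  have hwle : ∀ x, w x ≤ N := by
    intro x; have := hwneg x; omega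
  have hnotin : ∀ x, x ∈ A → neg x ∉ A := by
    intro x hx
    rw [hmem] at hx ⊢
    have h := hwneg x
    intro hcon
    have : (w x : ℝ) + (w (neg x) : ℝ) = N := by exact_mod_cast h
    linarith
  -- disjointness and cardinality bound
  have hdisj : Disjoint A (A.image neg) := by
    rw [Finset.disjoint_left]
    intro a ha hb
    obtain ⟨b, hbA, hba⟩ := Finset.mem_image.mp hb
    exact hnotin b hbA (hba ▸ ha)
  have hcard2 : 2 * A.card ≤ 2 ^ N := by
    have hinj : Function.Injective neg := by
      intro a b h
      have := congrArg neg h; rwa [hneginv, hneginv] at this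
    have h1 : (A ∪ A.image neg).card = A.card + A.card := by
      rw [Finset.card_union_of_disjoint hdisj, Finset.card_image_of_injective _ hinj]
    have h2 : (A ∪ A.image neg).card ≤ (Finset.univ : Finset (Fin N → Bool)).card :=
      Finset.card_le_card (Finset.subset_univ _)
    simp only [Finset.card_univ, Fintype.card_fun, Fintype.card_bool, Fintype.card_fin] at h2
    omega
  have hpow : 2 ^ N = 2 * 2 ^ (N - 1) := by
    rw [← pow_succ']; congr 1; omega
  refine ⟨hne, by omega, ?_⟩
  -- lower bound on |A|
  have hlow : 2 ^ N ≤ 2 * A.card + N.choose (N / 2) := by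
    set mid := (Finset.univ : Finset (Fin N → Bool)).filter (fun x => 2 * w x = N) with hmid
    have hcover : (Finset.univ : Finset (Fin N → Bool)) ⊆ A ∪ A.image neg ∪ mid := by
      intro x _
      simp only [Finset.mem_union]
      by_cases h1 : x ∈ A
      · left; left; exact h1
      by_cases h2 : neg x ∈ A
      · left; right; exact Finset.mem_image.mpr ⟨neg x, h2, hneginv x⟩
      right
      rw [hmem] at h1 h2
      push_neg at h1 h2
      have e1 : ((N:ℝ)) ≤ 2 * w x := by linarith
      have e2 : ((N:ℝ)) ≤ 2 * w (neg x) := by linarith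
      have hn1 : N ≤ 2 * w x := by exact_mod_cast e1
      have hn2 : N ≤ 2 * w (neg x) := by exact_mod_cast e2
      have := hwneg x
      rw [hmid, Finset.mem_filter]
      exact ⟨Finset.mem_univ _, by omega⟩
    have hmidle : mid.card ≤ N.choose (N / 2) := by
      calc mid.card ≤ ((Finset.univ : Finset (Fin N → Bool)).filter
          (fun x => w x = N / 2)).card := by
            apply Finset.card_le_card
            intro x hx
            rw [hmid, Finset.mem_filter] at hx
            rw [Finset.mem_filter]
            exact ⟨hx.1, by omega⟩
        _ ≤ N.choose (N / 2) := layer_card_le N (N / 2)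
    have h3 : (Finset.univ : Finset (Fin N → Bool)).card ≤
        (A ∪ A.image neg ∪ mid).card := Finset.card_le_card hcover
    have h4 : (A ∪ A.image neg ∪ mid).card ≤ A.card + A.card + mid.card := by
      calc (A ∪ A.image neg ∪ mid).card ≤ (A ∪ A.image neg).card + mid.card :=
            Finset.card_union_le _ _
        _ ≤ A.card + (A.image neg).card + mid.card := by
            have := Finset.card_union_le A (A.image neg); omega
        _ ≤ A.card + A.card + mid.card := by
            have := Finset.card_image_le (s := A) (f := neg); omega
    simp only [Finset.card_univ, Fintype.card_fun, Fintype.card_bool, Fintype.card_fin] at h3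
    omega
  -- real setup
  set s := Real.sqrt (N : ℝ) with hs
  have hs1 : 1 ≤ s := by
    rw [hs, show (1:ℝ) = Real.sqrt 1 by rw [Real.sqrt_one]]
    exact Real.sqrt_le_sqrt (by exact_mod_cast hN)
  set m : ℝ := (N.choose (N / 2) : ℝ) with hm
  have hm0 : 0 ≤ m := by positivity
  have hms : m * s ≤ 2 ^ N := choose_half_sqrt_le N
  have hlowR : (2:ℝ) ^ N ≤ 2 * A.card + m := by rw [hm]; exact_mod_cast hlow
  have hA0 : (0:ℝ) ≤ (A.card : ℝ) := by positivity
  by_cases hcs : c * s - 2 < 0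
  · -- trivial case: no perturbation possible
    have heq : A.filter (fun x => ∀ y : Fin N → Bool,
        (hammingDist x y : ℝ) ≤ c * s - 2 → C y = 0) = A := by
      apply Finset.filter_true_of_mem
      intro x _ y hy
      exact absurd hy (not_le.mpr (lt_of_lt_of_le hcs (Nat.cast_nonneg _)))
    rw [heq]
    nlinarith
  push_neg at hcs
  -- nonrobust points lie in a thin band
  set pred : (Fin N → Bool) → Prop := fun x => ∀ y : Fin N → Bool,
      (hammingDist x y : ℝ) ≤ c * s - 2 → C y = 0 with hpred
  classical
  have hsplit : (A.filter pred).card + (A.filter (fun x => ¬ pred x)).card = A.card :=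
    Finset.card_filter_add_card_filter_not _
  set B := (Finset.univ : Finset (Fin N → Bool)).filter
      (fun x => (N:ℝ)/2 - (c * s - 2) ≤ (w x : ℝ) ∧ (w x : ℝ) < (N:ℝ)/2) with hB
  have hNRsub : A.filter (fun x => ¬ pred x) ⊆ B := by
    intro x hx
    rw [Finset.mem_filter] at hx
    obtain ⟨hxA, hnp⟩ := hx
    rw [hpred] at hnp
    obtain ⟨y, hy⟩ := not_forall.mp hnp
    rw [Classical.not_imp] at hy
    obtain ⟨hyd, hyC⟩ := hy
    have hyw : (N:ℝ)/2 ≤ (w y : ℝ) := by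
      by_contra hcon
      push_neg at hcon
      exact hyC ((hC0 y).mpr hcon)
    have hd := wt_le N x y
    have hdR : (w y : ℝ) ≤ (w x : ℝ) + (hammingDist x y : ℝ) := by exact_mod_cast hd
    rw [hB, Finset.mem_filter]
    refine ⟨Finset.mem_univ _, by linarith, (hmem x).mp hxA⟩
  set k0 := ⌈(N:ℝ)/2 - (c * s - 2)⌉₊ with hk0
  set k1 := ⌈(N:ℝ)/2⌉₊ with hk1
  have hBsub : B ⊆ (Finset.Ico k0 k1).biUnion
      (fun k => (Finset.univ : Finset (Fin N → Bool)).filter (fun x => w x = k)) := by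
    intro x hx
    rw [hB, Finset.mem_filter] at hx
    obtain ⟨-, h1, h2⟩ := hx
    rw [Finset.mem_biUnion]
    refine ⟨w x, Finset.mem_Ico.mpr ⟨Nat.ceil_le.mpr h1, Nat.lt_ceil.mpr h2⟩, ?_⟩
    exact Finset.mem_filter.mpr ⟨Finset.mem_univ _, rfl⟩
  have hBcard : B.card ≤ (Finset.Ico k0 k1).card * N.choose (N / 2) := by
    calc B.card ≤ ((Finset.Ico k0 k1).biUnion _).card := Finset.card_le_card hBsub
      _ ≤ ∑ k ∈ Finset.Ico k0 k1, ((Finset.univ : Finset (Fin N → Bool)).filter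
          (fun x => w x = k)).card := Finset.card_biUnion_le
      _ ≤ ∑ k ∈ Finset.Ico k0 k1, N.choose (N / 2) := by
          apply Finset.sum_le_sum
          intro k _
          exact le_trans (layer_card_le N k) (Nat.choose_le_middle k N)
      _ = (Finset.Ico k0 k1).card * N.choose (N / 2) := by
          rw [Finset.sum_const, smul_eq_mul]
  have hKcard : ((Finset.Ico k0 k1).card : ℝ) ≤ c * s - 1 := by
    have hle : k0 ≤ k1 := Nat.ceil_le_ceil (by linarith)
    rw [Nat.card_Ico, Nat.cast_sub hle]
    have h1 : (k1 : ℝ) < (N:ℝ)/2 + 1 := Nat.ceil_lt_add_one (by positivity)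
    have h2 : (N:ℝ)/2 - (c * s - 2) ≤ (k0 : ℝ) := Nat.le_ceil _
    linarith
  have hNR : ((A.filter (fun x => ¬ pred x)).card : ℝ) ≤ (c * s - 1) * m := by
    have h1 : ((A.filter (fun x => ¬ pred x)).card : ℝ) ≤ (B.card : ℝ) := by
      exact_mod_cast Finset.card_le_card hNRsub
    have h2 : (B.card : ℝ) ≤ ((Finset.Ico k0 k1).card : ℝ) * m := by
      rw [hm]; exact_mod_cast hBcard
    calc ((A.filter (fun x => ¬ pred x)).card : ℝ) ≤ ((Finset.Ico k0 k1).card : ℝ) * m :=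
          le_trans h1 h2
      _ ≤ (c * s - 1) * m := mul_le_mul_of_nonneg_right hKcard hm0
  -- final arithmetic
  have hRcast : ((A.filter pred).card : ℝ) = (A.card : ℝ) -
      ((A.filter (fun x => ¬ pred x)).card : ℝ) := by
    have := hsplit; push_cast [← this]; ring
  rw [show (A.filter (fun x => ∀ y : Fin N → Bool,
      (hammingDist x y : ℝ) ≤ c * s - 2 → C y = 0)) = A.filter pred from rfl, hRcast]
  have e1 : 2*c*(2:ℝ)^N - 2*c*m ≤ 4*c*(A.card : ℝ) := by nlinarith
  have e2 : 2*c*(m*s) ≤ 2*c*(2:ℝ)^N := by nlinarith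
  have e3 : (0:ℝ) ≤ m*(c*s - 2*c + 1) := mul_nonneg hm0 (by nlinarith)
  nlinarith [hNR]
end
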